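/- For every integer n ≥ 1 and every real r with 0 < r and r ≠ 1, one has Δ_n = 2^{−n} · (1/(2πi)) · ∮_{|z|=r} (1,1) · (M(z)^{n−1} − M(1/z)^{n−1})/(1 − z) · (1,1)^T dz, where M(z) is the 2×2 complex matrix with rows (1, z⁻¹) and (1, z) and the integral is over the circle of radius r centered at the origin, traversed counterclockwise. -/

import Mathlib

open scoped Real

/-- Bob's score: number of indices `i < n-1` with `s i = H` and `s (i+1) = T`
    (`true` = heads). -/
def bobScore {n : ℕ} (s : Fin n → Bool) : ℕ :=
  (Finset.univ.filter (fun i : Fin (n - 1) =>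
    s ⟨i.1, lt_of_lt_of_le i.2 (Nat.sub_le n 1)⟩ = true ∧
    s ⟨i.1 + 1, Nat.add_lt_of_lt_sub i.2⟩ = false)).card

/-- Alice's score: number of indices `i < n-1` with `s i = H` and `s (i+1) = H`. -/
def aliceScore {n : ℕ} (s : Fin n → Bool) : ℕ :=
  (Finset.univ.filter (fun i : Fin (n - 1) =>
    s ⟨i.1, lt_of_lt_of_le i.2 (Nat.sub_le n 1)⟩ = true ∧
    s ⟨i.1 + 1, Nat.add_lt_of_lt_sub i.2⟩ = true)).card

/-- Number of length-`n` coin sequences where Bob's score strictly exceeds Alice's. -/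
def cB (n : ℕ) : ℕ :=
  (Finset.univ.filter (fun s : Fin n → Bool => aliceScore s < bobScore s)).card

/-- Number of length-`n` coin sequences where Alice's score strictly exceeds Bob's. -/
def cA (n : ℕ) : ℕ :=
  (Finset.univ.filter (fun s : Fin n → Bool => bobScore s < aliceScore s)).card

/-- `Δ_n = (c_B(n) - c_A(n)) / 2^n`, as a rational number. -/
def Δ (n : ℕ) : ℚ := ((cB n : ℚ) - (cA n : ℚ)) / 2 ^ n

/-- The transfer matrix `M(z)` with rows `(1, z⁻¹)` and `(1, z)`. -/
noncomputable def M (z : ℂ) : Matrix (Fin 2) (Fin 2) ℂ := !![1, z⁻¹; 1, z]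


open Finset

def wt (a b : Bool) : ℤ := if b then (if a then 1 else -1) else 0

def FF : (m : ℕ) → Bool → (Fin m → Bool) → ℤ
  | 0, _, _ => 0
  | (m+1), a, s => wt a (s 0) + FF m (s 0) (Fin.tail s)

def EE (m : ℕ) (t : Fin (m+1) → Bool) : ℤ := ∑ i : Fin m, wt (t i.castSucc) (t i.succ)


lemma sum_cons_split {m : ℕ} (g : (Fin (m+1) → Bool) → ℂ) :
    ∑ s : Fin (m+1) → Bool, g s = ∑ b : Bool, ∑ s : Fin m → Bool, g (Fin.cons b s) := by
  rw [← (Fin.consEquiv (fun _ : Fin (m+1) => Bool)).sum_comp g]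
  rw [Fintype.sum_prod_type]
  rfl

lemma FF_cons {m : ℕ} (a b : Bool) (s : Fin m → Bool) :
    FF (m+1) a (Fin.cons b s) = wt a b + FF m b s := by
  simp [FF]

lemma mulVec_pow (z : ℂ) (hz : z ≠ 0) (m : ℕ) :
    (M z ^ m).mulVec ![1,1] =
      ![∑ s : Fin m → Bool, z ^ FF m false s, ∑ s : Fin m → Bool, z ^ FF m true s] := by
  induction m with
  | zero =>
      simp [FF, Matrix.one_mulVec]
  | succ m ih =>
      rw [pow_succ', ← Matrix.mulVec_mulVec, ih]
      have hM : ∀ x y : ℂ, (M z).mulVec ![x, y] = ![x + z⁻¹ * y, x + z * y] := by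
        intro x y
        funext i
        fin_cases i <;> simp [M, Matrix.mulVec, dotProduct, Fin.sum_univ_two]
      rw [hM]
      have key : ∀ a : Bool, ∑ s : Fin (m+1) → Bool, z ^ FF (m+1) a s
          = ∑ b : Bool, z ^ wt a b * ∑ s : Fin m → Bool, z ^ FF m b s := by
        intro a
        rw [sum_cons_split (fun s => z ^ FF (m+1) a s)]
        refine Finset.sum_congr rfl fun b _ => ?_
        rw [Finset.mul_sum]
        refine Finset.sum_congr rfl fun s _ => ?_
        rw [FF_cons, zpow_add₀ hz]
      funext i
      fin_cases i
      · rw [key false]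
        simp [wt, Fintype.sum_bool, zpow_neg_one]
        ring
      · rw [key true]
        simp [wt, Fintype.sum_bool]
        ring

lemma FF_eq_EE {m : ℕ} (t : Fin (m+1) → Bool) : FF m (t 0) (Fin.tail t) = EE m t := by
  induction m with
  | zero => simp [FF, EE]
  | succ m ih =>
      have h1 : FF (m+1) (t 0) (Fin.tail t)
          = wt (t 0) (t 1) + FF m (t 1) (Fin.tail (Fin.tail t)) := by
        simp only [FF, Fin.tail]
        rfl
      have h2 := ih (Fin.tail t)
      have h3 : (Fin.tail t) 0 = t 1 := rfl
      rw [h3] at h2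
      have h4 : EE (m+1) t = wt (t 0) (t 1) + EE m (Fin.tail t) := by
        simp only [EE, Fin.sum_univ_succ]
        congr 1
      rw [h1, h2, h4]

lemma dot_transfer (z : ℂ) (hz : z ≠ 0) (m : ℕ) :
    dotProduct ![1,1] ((M z ^ m).mulVec ![1,1]) = ∑ t : Fin (m+1) → Bool, z ^ EE m t := by
  rw [mulVec_pow z hz m]
  have : ∑ t : Fin (m+1) → Bool, z ^ EE m t
      = ∑ b : Bool, ∑ s : Fin m → Bool, z ^ FF m b s := by
    rw [sum_cons_split (fun t => z ^ EE m t)]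
    refine Finset.sum_congr rfl fun b _ => Finset.sum_congr rfl fun s _ => ?_
    rw [← FF_eq_EE (Fin.cons b s)]
    simp
  rw [this, Fintype.sum_bool]
  simp [dotProduct, Fin.sum_univ_two]
  ring





def aAux (m : ℕ) (t : Fin (m+1) → Bool) : ℕ :=
  (Finset.univ.filter (fun i : Fin m => t i.castSucc = true ∧ t i.succ = true)).card

def bAux (m : ℕ) (t : Fin (m+1) → Bool) : ℕ :=
  (Finset.univ.filter (fun i : Fin m => t i.castSucc = true ∧ t i.succ = false)).card

def thAux (m : ℕ) (t : Fin (m+1) → Bool) : ℕ :=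
  (Finset.univ.filter (fun i : Fin m => t i.castSucc = false ∧ t i.succ = true)).card

lemma alice_eq {m : ℕ} (t : Fin (m+1) → Bool) : aliceScore t = aAux m t := rfl

lemma bob_eq {m : ℕ} (t : Fin (m+1) → Bool) : bobScore t = bAux m t := rfl

lemma EE_eq {m : ℕ} (t : Fin (m+1) → Bool) : EE m t = (aAux m t : ℤ) - (thAux m t : ℤ) := by
  have hw : ∀ a b : Bool, wt a b =
      (if a = true ∧ b = true then (1:ℤ) else 0) - (if a = false ∧ b = true then 1 else 0) := by
    decide
  rw [EE]
  simp only [hw]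
  rw [Finset.sum_sub_distrib, Finset.sum_boole, Finset.sum_boole, aAux, thAux]

def rev {m : ℕ} (t : Fin (m+1) → Bool) : Fin (m+1) → Bool := fun i => t i.rev

lemma rev_rev {m : ℕ} (t : Fin (m+1) → Bool) : rev (rev t) = t := by
  funext i; simp [rev]

lemma aAux_rev {m : ℕ} (t : Fin (m+1) → Bool) : aAux m (rev t) = aAux m t := by
  unfold aAux
  refine Finset.card_bij' (fun i _ => i.rev) (fun i _ => i.rev) ?_ ?_ ?_ ?_
  · intro i hi
    simp only [Finset.mem_filter, Finset.mem_univ, true_and, rev,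
      Fin.rev_castSucc, Fin.rev_succ, Fin.rev_rev] at hi ⊢
    exact ⟨hi.2, hi.1⟩
  · intro i hi
    simp only [Finset.mem_filter, Finset.mem_univ, true_and, rev,
      Fin.rev_castSucc, Fin.rev_succ, Fin.rev_rev] at hi ⊢
    exact ⟨hi.2, hi.1⟩
  · intro i _; simp
  · intro i _; simp

lemma thAux_rev {m : ℕ} (t : Fin (m+1) → Bool) : thAux m (rev t) = bAux m t := by
  unfold thAux bAux
  refine Finset.card_bij' (fun i _ => i.rev) (fun i _ => i.rev) ?_ ?_ ?_ ?_
  · intro i hi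
    simp only [Finset.mem_filter, Finset.mem_univ, true_and, rev,
      Fin.rev_castSucc, Fin.rev_succ, Fin.rev_rev] at hi ⊢
    exact ⟨hi.2, hi.1⟩
  · intro i hi
    simp only [Finset.mem_filter, Finset.mem_univ, true_and, rev,
      Fin.rev_castSucc, Fin.rev_succ, Fin.rev_rev] at hi ⊢
    exact ⟨hi.2, hi.1⟩
  · intro i _; simp
  · intro i _; simp

lemma mySignSum (m : ℕ) :
    ∑ t : Fin (m+1) → Bool,
      ((if EE m t < 0 then (1:ℤ) else 0) - (if 0 < EE m t then (1:ℤ) else 0))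
    = (cB (m+1) : ℤ) - (cA (m+1) : ℤ) := by
  have h1 : ∀ t : Fin (m+1) → Bool,
      ((if EE m t < 0 then (1:ℤ) else 0) - (if 0 < EE m t then (1:ℤ) else 0))
      = ((if aAux m t < thAux m t then (1:ℤ) else 0)
          - (if thAux m t < aAux m t then (1:ℤ) else 0)) := by
    intro t
    rw [EE_eq]
    congr 1
    · congr 1; simp [sub_neg]
    · congr 1; simp [sub_pos]
  simp only [h1]
  have h2 : ∑ t : Fin (m+1) → Bool,
      ((if aAux m t < thAux m t then (1:ℤ) else 0)
        - (if thAux m t < aAux m t then (1:ℤ) else 0))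
      = ∑ t : Fin (m+1) → Bool,
      ((if aAux m t < bAux m t then (1:ℤ) else 0)
        - (if bAux m t < aAux m t then (1:ℤ) else 0)) := by
    rw [← Equiv.sum_comp (Function.Involutive.toPerm rev rev_rev)
      (fun t => ((if aAux m t < thAux m t then (1:ℤ) else 0)
        - (if thAux m t < aAux m t then (1:ℤ) else 0)))]
    refine Finset.sum_congr rfl fun t _ => ?_
    simp [Function.Involutive.toPerm, aAux_rev, thAux_rev]
  rw [h2, Finset.sum_sub_distrib, Finset.sum_boole, Finset.sum_boole]
  rw [cB, cA]
  norm_num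
  congr 2 <;> · refine Finset.filter_congr fun t _ => ?_
                rw [alice_eq, bob_eq]

open Metric Complex in
lemma myCircleSum {ι : Type*} (S : Finset ι) (c : ℂ) (R : ℝ) (f : ι → ℂ → ℂ)
    (h : ∀ i ∈ S, CircleIntegrable (f i) c R) :
    (∮ z in C(c, R), ∑ i ∈ S, f i z) = ∑ i ∈ S, ∮ z in C(c, R), f i z := by
  simp only [circleIntegral, smul_eq_mul, Finset.mul_sum]
  exact intervalIntegral.integral_finset_sum fun i hi => by
    simpa [smul_eq_mul] using (h i hi).out


open Metric Complex

lemma cauchy_zero {r : ℝ} (hr : 0 < r) (f : ℂ → ℂ)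
    (hd : ∀ z ∈ closedBall (0:ℂ) r, DifferentiableAt ℂ f z) :
    (∮ z in C(0, r), f z) = 0 := by
  refine Complex.circleIntegral_eq_zero_of_differentiable_on_off_countable hr.le
    Set.countable_empty (fun z hz => (hd z hz).continuousAt.continuousWithinAt)
    (fun z hz => hd z (ball_subset_closedBall hz.1))

lemma int_inv_one {r : ℝ} (hr : 0 < r) (hr1 : r ≠ 1) :
    (∮ z in C(0, r), (1 - z)⁻¹) = if 1 < r then -(2 * ↑π * I) else 0 := by
  rcases lt_or_gt_of_ne hr1 with h | h
  · rw [if_neg (by linarith)]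
    refine cauchy_zero hr _ (fun z hz => ?_)
    have hz1 : (1:ℂ) - z ≠ 0 := by
      intro h0
      have : z = 1 := by linear_combination -h0
      rw [this] at hz
      simp [mem_closedBall, dist_eq] at hz
      linarith
    exact (differentiableAt_const _).sub differentiableAt_id |>.inv hz1
  · rw [if_pos h]
    have h1 : (1:ℂ) ∈ ball (0:ℂ) r := by
      simp [mem_ball, dist_eq]; exact h
    have hCauchy : (∮ z in C(0, r), (z - 1)⁻¹ • ((-1 : ℂ))) = (2 * ↑π * I : ℂ) • (-1 : ℂ) := by
      refine DiffContOnCl.circleIntegral_sub_inv_smul ?_ h1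
      exact (differentiableOn_const _).diffContOnCl
    have heq : ∀ z : ℂ, (1 - z)⁻¹ = (z - 1)⁻¹ • ((-1 : ℂ)) := by
      intro z
      rw [smul_eq_mul]
      rw [show (1:ℂ) - z = -(z - 1) by ring, inv_neg]
      ring
    calc (∮ z in C(0, r), (1 - z)⁻¹) = ∮ z in C(0, r), (z - 1)⁻¹ • ((-1:ℂ)) := by
            simp only [heq]
      _ = (2 * ↑π * I : ℂ) • (-1 : ℂ) := hCauchy
      _ = -(2 * ↑π * I) := by simp

lemma int_zpow {r : ℝ} {j : ℤ} (hj : j ≠ -1) : (∮ z in C(0, r), z ^ j) = 0 := by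
  have := circleIntegral.integral_sub_zpow_of_ne hj 0 0 r
  simpa using this

lemma int_inv_z {r : ℝ} (hr : 0 < r) : (∮ z in C(0, r), z⁻¹) = 2 * ↑π * I := by
  have h0 : (0:ℂ) ∈ ball (0:ℂ) r := by simp [hr]
  have := circleIntegral.integral_sub_inv_of_mem_ball h0
  simpa using this

lemma partial_frac (m : ℕ) {z : ℂ} (hz : z ≠ 0) (hz1 : z ≠ 1) :
    (1 - z)⁻¹ * z ^ (-(m:ℤ) - 1) =
      (∑ j ∈ Finset.range (m+1), z ^ (-(j:ℤ) - 1)) + (1 - z)⁻¹ := by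
  have h1z : (1:ℂ) - z ≠ 0 := by
    intro h0
    exact hz1 (by linear_combination -h0)
  have base : (1 - z)⁻¹ * z⁻¹ = z⁻¹ + (1 - z)⁻¹ := by
    field_simp
    ring
  induction m with
  | zero =>
      simp only [Finset.range_one, Finset.sum_singleton, Nat.cast_zero]
      norm_num [zpow_neg_one]
      linear_combination base
  | succ m ih =>
      rw [Finset.sum_range_succ]
      have e1 : (-((m+1:ℕ):ℤ) - 1) = (-(m:ℤ) - 1) + (-1) := by push_cast; ring
      rw [e1, zpow_add₀ hz, zpow_neg_one]
      set A := z ^ (-(m:ℤ) - 1) with hA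
      set S := ∑ j ∈ Finset.range (m+1), z ^ (-(j:ℤ) - 1) with hS
      have key : (1 - z)⁻¹ * (A * z⁻¹) = A * z⁻¹ + (S + (1 - z)⁻¹) := by
        calc (1 - z)⁻¹ * (A * z⁻¹) = ((1 - z)⁻¹ * z⁻¹) * A := by ring
          _ = (z⁻¹ + (1 - z)⁻¹) * A := by rw [base]
          _ = A * z⁻¹ + (1 - z)⁻¹ * A := by ring
          _ = A * z⁻¹ + (S + (1 - z)⁻¹) := by linear_combination ih
      rw [key]
      ring

lemma myCircleAdd {c : ℂ} {R : ℝ} {f g : ℂ → ℂ} (hf : CircleIntegrable f c R)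
    (hg : CircleIntegrable g c R) :
    (∮ z in C(c, R), (f z + g z)) = (∮ z in C(c, R), f z) + ∮ z in C(c, R), g z := by
  simp only [circleIntegral, smul_eq_mul, mul_add]
  exact intervalIntegral.integral_add (by simpa [smul_eq_mul] using hf.out)
    (by simpa [smul_eq_mul] using hg.out)

lemma sphere_ne_zero {r : ℝ} (hr : 0 < r) {z : ℂ} (hz : z ∈ sphere (0:ℂ) r) : z ≠ 0 := by
  rw [mem_sphere_zero_iff_norm] at hz
  intro h; rw [h] at hz; simp at hz; linarith

lemma sphere_ne_one {r : ℝ} (hr1 : r ≠ 1) {z : ℂ} (hz : z ∈ sphere (0:ℂ) r) : z ≠ 1 := by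
  rw [mem_sphere_zero_iff_norm] at hz
  intro h; rw [h] at hz; simp at hz; exact hr1 hz.symm

lemma sphere_one_sub_ne {r : ℝ} (hr1 : r ≠ 1) {z : ℂ} (hz : z ∈ sphere (0:ℂ) r) :
    (1:ℂ) - z ≠ 0 := by
  intro h0
  exact sphere_ne_one hr1 hz (by linear_combination -h0)

lemma circleInt_zpow_frac {r : ℝ} (hr : 0 < r) (hr1 : r ≠ 1) (j : ℤ) :
    CircleIntegrable (fun z => z ^ j) 0 r ∧ CircleIntegrable (fun z => (1 - z)⁻¹) 0 r := by
  constructor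
  · refine ContinuousOn.circleIntegrable hr.le ?_
    exact ContinuousOn.zpow₀ continuousOn_id j (fun z hz => Or.inl (sphere_ne_zero hr hz))
  · refine ContinuousOn.circleIntegrable hr.le ?_
    exact (continuousOn_const.sub continuousOn_id).inv₀ (fun z hz => sphere_one_sub_ne hr1 hz)

lemma int_main {r : ℝ} (hr : 0 < r) (hr1 : r ≠ 1) (k : ℤ) :
    (∮ z in C(0, r), (1 - z)⁻¹ * z ^ k)
      = (if k < 0 then (2 * ↑π * I) else 0) + (if 1 < r then -(2 * ↑π * I) else 0) := by
  rcases lt_or_ge k 0 with hk | hk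
  · -- k < 0 : k = -(m:ℤ) - 1
    obtain ⟨m, hm⟩ : ∃ m : ℕ, k = -(m:ℤ) - 1 := ⟨(-k - 1).toNat, by omega⟩
    subst hm
    rw [if_pos hk]
    have hcong : (∮ z in C(0, r), (1 - z)⁻¹ * z ^ (-(m:ℤ) - 1))
        = ∮ z in C(0, r), ((∑ j ∈ Finset.range (m+1), z ^ (-(j:ℤ) - 1)) + (1 - z)⁻¹) := by
      refine circleIntegral.integral_congr hr.le (fun z hz => ?_)
      exact partial_frac m (sphere_ne_zero hr hz) (sphere_ne_one hr1 hz)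
    rw [hcong]
    have hint1 : CircleIntegrable (fun z : ℂ => ∑ j ∈ Finset.range (m+1), z ^ (-(j:ℤ) - 1)) 0 r := by
      refine ContinuousOn.circleIntegrable hr.le ?_
      refine continuousOn_finset_sum _ (fun j _ => ?_)
      exact ContinuousOn.zpow₀ continuousOn_id _ (fun z hz => Or.inl (sphere_ne_zero hr hz))
    rw [myCircleAdd hint1 (circleInt_zpow_frac hr hr1 0).2]
    rw [myCircleSum (Finset.range (m+1)) 0 r (fun j z => z ^ (-(j:ℤ) - 1)) (fun j _ => (circleInt_zpow_frac hr hr1 (-(j:ℤ) - 1)).1)]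
    rw [int_inv_one hr hr1]
    congr 1
    have hval : ∀ j ∈ Finset.range (m+1),
        (∮ z in C(0, r), z ^ (-(j:ℤ) - 1)) = if j = 0 then 2 * ↑π * I else 0 := by
      intro j _
      rcases eq_or_ne j 0 with rfl | hj
      · rw [if_pos rfl]
        have : (fun z : ℂ => z ^ (-(0:ℤ) - 1)) = fun z : ℂ => z⁻¹ := by
          funext z; norm_num [zpow_neg_one]
        rw [show (∮ z in C(0, r), z ^ (-((0:ℕ):ℤ) - 1)) = ∮ z in C(0, r), z⁻¹ by
          refine circleIntegral.integral_congr hr.le (fun z _ => ?_); norm_num [zpow_neg_one]]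
        exact int_inv_z hr
      · rw [if_neg hj]
        exact int_zpow (by omega)
    rw [Finset.sum_congr rfl hval, Finset.sum_ite_eq' (Finset.range (m+1)) 0 (fun _ => 2 * ↑π * I)]
    simp
  · -- k ≥ 0
    rw [if_neg (by omega)]
    have hzk : ∀ z : ℂ, z ^ k = z ^ k.toNat := by
      intro z; rw [← zpow_natCast, Int.toNat_of_nonneg hk]
    rcases lt_or_gt_of_ne hr1 with h | h
    · rw [if_neg (by linarith)]
      rw [zero_add]
      refine cauchy_zero hr _ (fun z hz => ?_)
      have hz1 : (1:ℂ) - z ≠ 0 := by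
        intro h0
        have hz1' : z = 1 := by linear_combination -h0
        rw [hz1'] at hz
        simp [mem_closedBall, dist_eq] at hz
        linarith
      have : DifferentiableAt ℂ (fun z : ℂ => (1 - z)⁻¹ * z ^ k.toNat) z :=
        (((differentiableAt_const _).sub differentiableAt_id).inv hz1).mul (differentiableAt_pow _)
      refine this.congr_of_eventuallyEq ?_
      filter_upwards with w
      rw [hzk]
    · rw [if_pos h, zero_add]
      have h1 : (1:ℂ) ∈ ball (0:ℂ) r := by simp [mem_ball, dist_eq]; exact h
      have hCauchy : (∮ z in C(0, r), (z - 1)⁻¹ • (-(z ^ k.toNat) : ℂ))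
          = (2 * ↑π * I : ℂ) • (-(1 ^ k.toNat) : ℂ) :=
        DiffContOnCl.circleIntegral_sub_inv_smul
          (((differentiable_pow _).neg).differentiableOn.diffContOnCl) h1
      have heq : ∀ z : ℂ, (1 - z)⁻¹ * z ^ k = (z - 1)⁻¹ • (-(z ^ k.toNat) : ℂ) := by
        intro z
        rw [smul_eq_mul, hzk, show (1:ℂ) - z = -(z - 1) by ring, inv_neg]
        ring
      calc (∮ z in C(0, r), (1 - z)⁻¹ * z ^ k)
          = ∮ z in C(0, r), (z - 1)⁻¹ • (-(z ^ k.toNat) : ℂ) := by simp only [heq]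
        _ = (2 * ↑π * I : ℂ) • (-(1 ^ k.toNat) : ℂ) := hCauchy
        _ = -(2 * ↑π * I) := by simp

/-- Complex-integral formula for `Δ_n`: for any `n ≥ 1` and any circle of radius
    `r > 0`, `r ≠ 1`, centered at the origin,
    `Δ_n = 2⁻ⁿ (2πi)⁻¹ ∮ (1,1)(M(z)^(n-1) - M(1/z)^(n-1))(1-z)⁻¹(1,1)ᵀ dz`. -/
theorem delta_eq_circleIntegral (n : ℕ) (hn : 1 ≤ n) (r : ℝ) (hr : 0 < r) (hr1 : r ≠ 1) :
    (Δ n : ℂ) = (2 : ℂ) ^ (-(n : ℤ)) * (1 / (2 * (π : ℂ) * Complex.I)) *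
      (∮ z in C(0, r), dotProduct ![1, 1]
        (((1 - z)⁻¹ • (M z ^ (n - 1) - M z⁻¹ ^ (n - 1))).mulVec ![1, 1])) := by
  obtain ⟨m, rfl⟩ : ∃ m, n = m + 1 := ⟨n - 1, (Nat.succ_pred_eq_of_pos hn).symm⟩
  have hπ : (2 * (π:ℂ) * I) ≠ 0 := by
    simp [Real.pi_ne_zero, I_ne_zero, Complex.ext_iff, Real.pi_ne_zero]
  -- Step 1: rewrite the integrand as a finite sum over sequences
  have hcong : (∮ z in C(0, r), dotProduct ![1, 1]
        (((1 - z)⁻¹ • (M z ^ (m + 1 - 1) - M z⁻¹ ^ (m + 1 - 1))).mulVec ![1, 1]))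
      = ∮ z in C(0, r), ∑ t : Fin (m+1) → Bool,
          ((1 - z)⁻¹ * z ^ EE m t - (1 - z)⁻¹ * z ^ (-EE m t)) := by
    refine circleIntegral.integral_congr hr.le fun z hz => ?_
    have hz0 := sphere_ne_zero hr hz
    have hz0' : z⁻¹ ≠ 0 := inv_ne_zero hz0
    simp only [Nat.add_sub_cancel]
    rw [Matrix.smul_mulVec, Matrix.sub_mulVec]
    rw [dotProduct_smul, dotProduct_sub]
    rw [dot_transfer z hz0 m, dot_transfer z⁻¹ hz0' m]
    have hzz : ∀ t : Fin (m+1) → Bool, (z⁻¹) ^ EE m t = z ^ (-EE m t) := by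
      intro t; rw [inv_zpow, ← zpow_neg]
    rw [Finset.sum_congr rfl (fun t _ => hzz t)]
    rw [smul_eq_mul, mul_sub, Finset.mul_sum, Finset.mul_sum, ← Finset.sum_sub_distrib]
  rw [hcong]
  -- Step 2: swap sum and integral
  have hci : ∀ k : ℤ, CircleIntegrable (fun z : ℂ => (1 - z)⁻¹ * z ^ k) 0 r := by
    intro k
    refine ContinuousOn.circleIntegrable hr.le ?_
    exact ((continuousOn_const.sub continuousOn_id).inv₀
        (fun z hz => sphere_one_sub_ne hr1 hz)).mul
      (ContinuousOn.zpow₀ continuousOn_id k (fun z hz => Or.inl (sphere_ne_zero hr hz)))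
  rw [myCircleSum Finset.univ 0 r
      (fun t z => (1 - z)⁻¹ * z ^ EE m t - (1 - z)⁻¹ * z ^ (-EE m t))
      (fun t _ => (hci (EE m t)).sub (hci (-EE m t)))]
  -- Step 3: evaluate each integral
  have hval : ∀ t : Fin (m+1) → Bool,
      (∮ z in C(0, r), ((1 - z)⁻¹ * z ^ EE m t - (1 - z)⁻¹ * z ^ (-EE m t)))
      = (2 * ↑π * I) * ((if EE m t < 0 then (1:ℂ) else 0) - (if 0 < EE m t then (1:ℂ) else 0)) := by
    intro t
    rw [circleIntegral.integral_sub (hci (EE m t)) (hci (-EE m t)),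
      int_main hr hr1 (EE m t), int_main hr hr1 (-EE m t)]
    have : (-EE m t < 0) ↔ (0 < EE m t) := by omega
    rw [if_congr this rfl rfl]
    split_ifs <;> ring
  rw [Finset.sum_congr rfl (fun t _ => hval t), ← Finset.mul_sum]
  -- Step 4: the sign sum
  have hsum : ∑ t : Fin (m+1) → Bool,
      ((if EE m t < 0 then (1:ℂ) else 0) - (if 0 < EE m t then (1:ℂ) else 0))
      = ((cB (m+1) : ℤ) - (cA (m+1) : ℤ) : ℤ) := by
    rw [← mySignSum m]
    push_cast
    refine Finset.sum_congr rfl fun t _ => ?_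
    split_ifs <;> norm_num
  rw [hsum]
  -- Step 5: arithmetic
  rw [Δ]
  push_cast
  rw [zpow_neg]
  have h2 : (2:ℂ) ^ ((m:ℤ) + 1) = (2:ℂ) ^ (m + 1 : ℕ) := by
    rw [← zpow_natCast]
    norm_num
  rw [h2]
  field_simp
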